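/- The exponential generating function of the Catalan numbers satisfies Σ_{n≥0} Cat(n)·xⁿ/n! = e^{2x}·(I₀(2x) − I₁(2x)) for all real x, where I₀ and I₁ are modified Bessel functions of the first kind, I_ν(z) = Σ_{m≥0} (z/2)^{2m+ν}/(m!·(m+ν)!). -/

import Mathlib

open Polynomial Finset

lemma key (n ν : ℕ) :
    (2*n).choose (n+ν) =
      ∑ k ∈ range (n+1), 2^(n-k-(k+ν)) * ((n-k).choose (k+ν)) * n.choose k := by
  have h2 : (X+1:ℕ[X])^(2*n) = (1 + X*(X + C 2))^n := by
    rw [pow_mul]; congr 1; simp [C_eq_natCast]; ring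
  have h1 : ((X+1:ℕ[X])^(2*n)).coeff (n+ν) = (2*n).choose (n+ν) := by
    rw [coeff_X_add_one_pow]; simp
  rw [← h1, h2, add_pow, Polynomial.finset_sum_coeff]
  refine Finset.sum_congr rfl fun k hk => ?_
  have hkn : k ≤ n := Nat.lt_succ_iff.1 (mem_range.1 hk)
  rw [one_pow, one_mul, ← C_eq_natCast, coeff_mul_C, mul_pow]
  have hd : n + ν = (k + ν) + (n - k) := by omega
  rw [hd, coeff_X_pow_mul, coeff_X_add_C_pow]
  simp [Nat.cast_id]

lemma keyR (n ν : ℕ) (hν : ν ≤ 1) :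
    ∑ m ∈ range ((n+2-ν)/2),
      (n.factorial : ℝ) * 2^(n-2*m-ν) /
        ((n-2*m-ν).factorial * m.factorial * (m+ν).factorial)
      = (2*n).choose (n+ν) := by
  have hsub : range ((n+2-ν)/2) ⊆ range (n+1) := by
    apply range_subset_range.2; omega
  have hvan : ∀ k ∈ range (n+1), k ∉ range ((n+2-ν)/2) →
      ((2^(n-k-(k+ν)) * (n-k).choose (k+ν) * n.choose k : ℕ) : ℝ) = 0 := by
    intro k hk hk2
    have h1 : k ≤ n := Nat.lt_succ_iff.1 (mem_range.1 hk)
    have h2 : ¬ (2*k + ν ≤ n) := by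
      simp only [mem_range] at hk2 ⊢; omega
    have : n - k < k + ν := by omega
    rw [Nat.choose_eq_zero_of_lt this]
    push_cast; ring
  rw [key n ν, Nat.cast_sum, ← Finset.sum_subset hsub hvan]
  refine Finset.sum_congr rfl fun m hm => ?_
  have h2 : 2*m + ν ≤ n := by
    simp only [mem_range] at hm; omega
  have hc1 : ((n-m).choose (m+ν) : ℝ)
      = (n-m).factorial / ((m+ν).factorial * ((n-m)-(m+ν)).factorial) :=
    Nat.cast_choose ℝ (by omega)
  have hc2 : (n.choose m : ℝ) = n.factorial / (m.factorial * (n-m).factorial) :=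
    Nat.cast_choose ℝ (by omega)
  have he1 : n - m - (m+ν) = n - 2*m - ν := by omega
  push_cast
  rw [hc1, hc2, he1]
  have f1 : ((n-2*m-ν).factorial : ℝ) ≠ 0 := Nat.cast_ne_zero.2 (Nat.factorial_ne_zero _)
  have f2 : (m.factorial : ℝ) ≠ 0 := Nat.cast_ne_zero.2 (Nat.factorial_ne_zero _)
  have f3 : ((m+ν).factorial : ℝ) ≠ 0 := Nat.cast_ne_zero.2 (Nat.factorial_ne_zero _)
  have f4 : ((n-m).factorial : ℝ) ≠ 0 := Nat.cast_ne_zero.2 (Nat.factorial_ne_zero _)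
  field_simp


lemma sum_ite_even {M : Type*} [AddCommMonoid M] (f : ℕ → M) (N : ℕ) :
    ∑ l ∈ range N, (if Even l then f l else 0) = ∑ m ∈ range ((N+1)/2), f (2*m) := by
  induction N with
  | zero => simp
  | succ N ih =>
    rw [Finset.sum_range_succ, ih]
    rcases Nat.even_or_odd N with h | h
    · obtain ⟨c, rfl⟩ := h
      rw [if_pos (by exact ⟨c, rfl⟩), show (c+c+1+1)/2 = (c+c+1)/2 + 1 by omega,
        Finset.sum_range_succ, show (c+c+1)/2 = c by omega, two_mul]
    · obtain ⟨c, rfl⟩ := h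
      rw [if_neg (by rw [Nat.even_iff]; omega),
        show (2*c+1+1)/2 = (2*c+1+1+1)/2 by omega, add_zero]

lemma sum_ite_odd {M : Type*} [AddCommMonoid M] (f : ℕ → M) (N : ℕ) :
    ∑ l ∈ range N, (if Even l then 0 else f l) = ∑ m ∈ range (N/2), f (2*m+1) := by
  induction N with
  | zero => simp
  | succ N ih =>
    rw [Finset.sum_range_succ, ih]
    rcases Nat.even_or_odd N with h | h
    · rw [if_pos h, show (N+1)/2 = N/2 by obtain ⟨c, rfl⟩ := h; omega, add_zero]
    · obtain ⟨c, rfl⟩ := h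
      rw [if_neg (by rw [Nat.even_iff]; omega),
        show (2*c+1+1)/2 = (2*c+1)/2 + 1 by omega, Finset.sum_range_succ,
        show (2*c+1)/2 = c by omega]

lemma cat_eq (n : ℕ) :
    (catalan n : ℝ) = ((2*n).choose n : ℝ) - ((2*n).choose (n+1) : ℝ) := by
  have h1 : ((n : ℝ) + 1) * (catalan n : ℝ) = ((2*n).choose n : ℝ) := by
    have := succ_mul_catalan_eq_centralBinom n
    have h := congrArg (fun t : ℕ => (t : ℝ)) this
    simpa [Nat.centralBinom] using h
  have h2 : ((2*n).choose (n+1) : ℝ) * ((n:ℝ)+1) = ((2*n).choose n : ℝ) * n := by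
    have := Nat.choose_succ_right_eq (2*n) n
    have h := congrArg (fun t : ℕ => (t : ℝ)) this
    simpa [show 2*n - n = n by omega] using h
  have hne : ((n:ℝ)+1) ≠ 0 := by positivity
  have h3 : ((n:ℝ)+1) * (catalan n : ℝ)
      = ((n:ℝ)+1) * (((2*n).choose n : ℝ) - ((2*n).choose (n+1) : ℝ)) := by
    linear_combination h1 + h2
  exact mul_left_cancel₀ hne h3

/-- The modified Bessel function of the first kind of integer order ν,
I_ν(z) = Σ_{m≥0} (z/2)^{2m+ν}/(m!·(m+ν)!). -/
noncomputable def besselI (ν : ℕ) (z : ℝ) : ℝ :=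
  ∑' m : ℕ, (z / 2) ^ (2 * m + ν) / ((m.factorial : ℝ) * ((m + ν).factorial : ℝ))

/-- The egf of the Catalan numbers: Σ_{n≥0} Cat(n)xⁿ/n! = e^{2x}(I₀(2x) - I₁(2x)). -/
theorem stmt15 (x : ℝ) :
    (∑' n : ℕ, (catalan n : ℝ) * x ^ n / (n.factorial : ℝ)) =
      Real.exp (2 * x) * (besselI 0 (2 * x) - besselI 1 (2 * x)) := by
  set g : ℕ → ℝ := fun l => (-1)^l * x^l / ((l/2).factorial * ((l+1)/2).factorial) with hg
  have hBe : ∀ m : ℕ, g (2*m) = x^(2*m) / ((m.factorial : ℝ) * m.factorial) := by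
    intro m
    simp only [hg]
    rw [show (2*m)/2 = m by omega, show (2*m+1)/2 = m by omega, pow_mul, pow_mul]
    norm_num [neg_one_sq]
  have hBo : ∀ m : ℕ, g (2*m+1) = -(x^(2*m+1) / ((m.factorial : ℝ) * (m+1).factorial)) := by
    intro m
    simp only [hg]
    rw [show (2*m+1)/2 = m by omega, show (2*m+1+1)/2 = m+1 by omega]
    rw [pow_succ, pow_mul, neg_one_sq]
    norm_num
    ring
  have hI0 : besselI 0 (2*x) = ∑' m, g (2*m) := by
    unfold besselI
    refine tsum_congr fun m => ?_
    rw [hBe m, show 2*x/2 = x by ring]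
    simp
  have hI1 : besselI 1 (2*x) = ∑' m, -(g (2*m+1)) := by
    unfold besselI
    refine tsum_congr fun m => ?_
    rw [hBo m, show 2*x/2 = x by ring]
    simp
  -- summability
  have sE : Summable (fun m : ℕ => |g (2*m)|) := by
    refine Summable.of_nonneg_of_le (fun m => abs_nonneg _) (fun m => ?_)
      (Real.summable_pow_div_factorial (x^2))
    rw [hBe m, pow_mul]
    rw [abs_div, abs_of_nonneg (by positivity : (0:ℝ) ≤ (x^2)^m)]
    rw [abs_of_nonneg (by positivity : (0:ℝ) ≤ ((m.factorial : ℝ) * m.factorial))]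
    have h1 : (1:ℝ) ≤ m.factorial := by exact_mod_cast m.factorial_pos
    gcongr
    nlinarith
  have sO : Summable (fun m : ℕ => |g (2*m+1)|) := by
    refine Summable.of_nonneg_of_le (fun m => abs_nonneg _) (fun m => ?_)
      ((Real.summable_pow_div_factorial (x^2)).mul_left |x|)
    rw [hBo m, abs_neg, abs_div, abs_of_nonneg
      (by positivity : (0:ℝ) ≤ ((m.factorial : ℝ) * (m+1).factorial))]
    rw [pow_succ, pow_mul, abs_mul, abs_pow, abs_of_nonneg (sq_nonneg x)]
    have h1 : (1:ℝ) ≤ m.factorial := by exact_mod_cast m.factorial_pos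
    have h2 : (1:ℝ) ≤ (m+1).factorial := by exact_mod_cast (m+1).factorial_pos
    calc (x^2)^m * |x| / ((m.factorial : ℝ) * (m+1).factorial)
        ≤ (x^2)^m * |x| / m.factorial := by gcongr; nlinarith
      _ = |x| * ((x^2)^m / m.factorial) := by ring
  have sge : Summable (fun m : ℕ => g (2*m)) := (summable_abs_iff.1 sE)
  have sgo : Summable (fun m : ℕ => g (2*m+1)) := (summable_abs_iff.1 sO)
  have hsplit : (∑' m : ℕ, g (2*m)) + (∑' m : ℕ, g (2*m+1)) = ∑' l, g l :=
    tsum_even_add_odd sge sgo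
  have hgnorm : Summable (fun l : ℕ => ‖g l‖) := by
    refine Summable.even_add_odd ?_ ?_
    · simpa [Real.norm_eq_abs] using sE
    · simpa [Real.norm_eq_abs] using sO
  have hIdiff : besselI 0 (2*x) - besselI 1 (2*x) = ∑' l, g l := by
    rw [hI0, hI1, tsum_neg, sub_neg_eq_add, hsplit]
  have hexp : Real.exp (2*x) = ∑' k : ℕ, (2*x)^k / (k.factorial : ℝ) := by
    rw [Real.exp_eq_exp_ℝ, NormedSpace.exp_eq_tsum_div]
  have hfnorm : Summable (fun k : ℕ => ‖(2*x)^k / (k.factorial : ℝ)‖) := by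
    have := Real.summable_pow_div_factorial |2*x|
    refine this.congr fun k => ?_
    rw [Real.norm_eq_abs, abs_div, abs_pow, Nat.abs_cast]
  have cauchy : Real.exp (2*x) * (besselI 0 (2*x) - besselI 1 (2*x))
      = ∑' n : ℕ, ∑ kl ∈ Finset.HasAntidiagonal.antidiagonal n, (2*x)^kl.1 / (kl.1.factorial : ℝ) * g kl.2 := by
    rw [hexp, hIdiff]
    exact tsum_mul_tsum_eq_tsum_sum_antidiagonal_of_summable_norm hfnorm hgnorm
  have percoef : ∀ n : ℕ, ∑ kl ∈ Finset.HasAntidiagonal.antidiagonal n, (2*x)^kl.1 / (kl.1.factorial : ℝ) * g kl.2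
      = (catalan n : ℝ) * x^n / (n.factorial : ℝ) := by
    intro n
    rw [Finset.Nat.sum_antidiagonal_eq_sum_range_succ_mk]
    have refl1 : ∑ k ∈ Finset.range (n+1), (2*x)^k / (k.factorial : ℝ) * g (n - k)
        = ∑ l ∈ Finset.range (n+1), (2*x)^(n-l) / ((n-l).factorial : ℝ) * g l := by
      rw [← Finset.sum_range_reflect]
      refine Finset.sum_congr rfl fun l hl => ?_
      have hln : l ≤ n := Nat.lt_succ_iff.1 (Finset.mem_range.1 hl)
      simp only [Nat.add_sub_cancel]
      rw [Nat.sub_sub_self hln]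
    rw [refl1]
    have split : ∀ l ∈ Finset.range (n+1), (2*x)^(n-l)/((n-l).factorial:ℝ) * g l
        = (if Even l then (2*x)^(n-l)/((n-l).factorial:ℝ) * g l else 0)
          + (if Even l then 0 else (2*x)^(n-l)/((n-l).factorial:ℝ) * g l) := by
      intro l _
      by_cases h : Even l <;> simp [h]
    rw [Finset.sum_congr rfl split, Finset.sum_add_distrib, sum_ite_even, sum_ite_odd]
    have hfac : (n.factorial : ℝ) ≠ 0 := Nat.cast_ne_zero.2 (Nat.factorial_ne_zero _)
    have hEsum : ∑ m ∈ Finset.range ((n+1+1)/2), (2*x)^(n-2*m)/((n-2*m).factorial:ℝ) * g (2*m)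
        = x^n / n.factorial * ∑ m ∈ Finset.range ((n+2-0)/2),
            (n.factorial : ℝ) * 2^(n-2*m-0) /
              ((n-2*m-0).factorial * m.factorial * (m+0).factorial) := by
      rw [Finset.mul_sum]
      refine Finset.sum_congr (by congr 1 <;> omega) fun m hm => ?_
      have h2 : 2*m ≤ n := by have := Finset.mem_range.1 hm; omega
      rw [hBe m, mul_pow, show x^n = x^(n-2*m) * x^(2*m) by rw [← pow_add]; congr 1; omega]
      simp only [Nat.sub_zero, Nat.add_zero]
      field_simp
    have hOsum : ∑ m ∈ Finset.range ((n+1)/2),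
          (2*x)^(n-(2*m+1))/((n-(2*m+1)).factorial:ℝ) * g (2*m+1)
        = -(x^n / n.factorial) * ∑ m ∈ Finset.range ((n+2-1)/2),
            (n.factorial : ℝ) * 2^(n-2*m-1) /
              ((n-2*m-1).factorial * m.factorial * (m+1).factorial) := by
      rw [neg_mul, Finset.mul_sum, ← Finset.sum_neg_distrib]
      refine Finset.sum_congr (by congr 1 <;> omega) fun m hm => ?_
      have h2 : 2*m + 1 ≤ n := by have := Finset.mem_range.1 hm; omega
      rw [hBo m, show n - (2*m+1) = n - 2*m - 1 by omega, mul_pow,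
        show x^n = x^(n-2*m-1) * x^(2*m+1) by rw [← pow_add]; congr 1; omega]
      field_simp
    rw [hEsum, hOsum, keyR n 0 (by norm_num), keyR n 1 (by norm_num)]
    rw [cat_eq n]
    push_cast
    ring
  rw [cauchy]
  exact tsum_congr fun n => (percoef n).symm
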